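/- arXiv:1003.5097 — 4 statements merged into one kernel-verified Lean document; each statement's English description precedes it below -/
import Mathlib

section
/- Let β > 0, m > 0, 0 < α < 1, and define r_L = [log(1 + αβL)/log(1 + βL)] · Q(mL, αmL), where Q(a,x) = Γ(a,x)/Γ(a). Then r_L → 1 as L → ∞. -/
open Filter

noncomputable def upperIncGamma (a x : ℝ) : ℝ :=
  ∫ t in Set.Ioi x, t ^ (a - 1) * Real.exp (-t)

noncomputable def normUpperIncGamma (a x : ℝ) : ℝ :=
  upperIncGamma a x / Real.Gamma a

open Real MeasureTheory Set in
lemma gammaIntegrand_intOn {a : ℝ} (ha : 0 < a) :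
    IntegrableOn (fun t : ℝ => t ^ (a - 1) * Real.exp (-t)) (Set.Ioi 0) := by
  have h := Real.GammaIntegral_convergent ha
  simpa [mul_comm] using h

open Real MeasureTheory Set in
lemma gamma_split {a x : ℝ} (ha : 0 < a) (hx : 0 < x) :
    Real.Gamma a = (∫ t in Set.Ioc 0 x, t ^ (a - 1) * Real.exp (-t)) + upperIncGamma a x := by
  have hint := gammaIntegrand_intOn ha
  have hu : Set.Ioc 0 x ∪ Set.Ioi x = Set.Ioi 0 := Set.Ioc_union_Ioi_eq_Ioi hx.le
  rw [Real.Gamma_eq_integral ha]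
  have hcomm : (∫ t in Set.Ioi 0, Real.exp (-t) * t ^ (a - 1))
      = ∫ t in Set.Ioi 0, t ^ (a - 1) * Real.exp (-t) := by
    congr 1; ext t; ring
  rw [hcomm, ← hu, MeasureTheory.setIntegral_union (Set.Ioc_disjoint_Ioi le_rfl)
    measurableSet_Ioi
    (hint.mono_set (by rw [← hu]; exact Set.subset_union_left))
    (hint.mono_set (by rw [← hu]; exact Set.subset_union_right))]
  rfl

open Real MeasureTheory Set in
lemma lower_nonneg (a x : ℝ) :
    0 ≤ ∫ t in Set.Ioc 0 x, t ^ (a - 1) * Real.exp (-t) := by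
  apply setIntegral_nonneg measurableSet_Ioc
  intro t ht
  exact mul_nonneg (Real.rpow_nonneg ht.1.le _) (Real.exp_nonneg _)

open Real MeasureTheory Set in
lemma pointwise_le {a x t : ℝ} (hx0 : 0 < x) (hxa : x ≤ a - 1) (ht0 : 0 < t) (htx : t ≤ x) :
    t ^ (a - 1) * Real.exp (-t) ≤ x ^ (a - 1) * Real.exp (-x) := by
  rw [Real.rpow_def_of_pos ht0, Real.rpow_def_of_pos hx0, ← Real.exp_add, ← Real.exp_add]
  apply Real.exp_le_exp.2
  have hlog1 : Real.log t - Real.log x ≤ (t - x) / x := by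
    rw [← Real.log_div ht0.ne' hx0.ne']
    have h := Real.log_le_sub_one_of_pos (div_pos ht0 hx0)
    have : t / x - 1 = (t - x) / x := by field_simp
    linarith [this ▸ h]
  have hlog0 : Real.log t - Real.log x ≤ 0 := by
    have := Real.log_le_log ht0 htx
    linarith
  have hx' : x * (Real.log t - Real.log x) ≤ t - x := by
    have h := mul_le_mul_of_nonneg_left hlog1 hx0.le
    have hq : x * ((t - x) / x) = t - x := by field_simp
    linarith [hq ▸ h]
  nlinarith [mul_nonneg (sub_nonneg.2 hxa) (neg_nonneg.2 hlog0)]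

open Real MeasureTheory Set in
lemma lower_le {a x : ℝ} (ha : 0 < a) (hx0 : 0 < x) (hxa : x ≤ a - 1) :
    (∫ t in Set.Ioc 0 x, t ^ (a - 1) * Real.exp (-t))
      ≤ x ^ (a - 1) * Real.exp (-x) * x := by
  have h1 : (∫ t in Set.Ioc 0 x, t ^ (a - 1) * Real.exp (-t))
      ≤ ∫ _t in Set.Ioc 0 x, x ^ (a - 1) * Real.exp (-x) := by
    apply MeasureTheory.setIntegral_mono_on
    · exact (gammaIntegrand_intOn ha).mono_set Set.Ioc_subset_Ioi_self
    · exact integrableOn_const measure_Ioc_lt_top.ne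
    · exact measurableSet_Ioc
    · intro t ht
      exact pointwise_le hx0 hxa ht.1 ht.2
  have h2 : (∫ _t in Set.Ioc 0 x, x ^ (a - 1) * Real.exp (-x))
      = x ^ (a - 1) * Real.exp (-x) * x := by
    rw [MeasureTheory.setIntegral_const, MeasureTheory.measureReal_def, Real.volume_Ioc, smul_eq_mul]
    rw [ENNReal.toReal_ofReal (by linarith)]
    ring
  linarith [h2 ▸ h1]

open Real MeasureTheory Set in
lemma gamma_ge {a s : ℝ} (ha : 1 ≤ a) (hs : 0 < s) :
    s ^ (a - 1) * Real.exp (-(s + 1)) ≤ Real.Gamma a := by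
  have ha0 : (0 : ℝ) < a := lt_of_lt_of_le one_pos ha
  have hint := gammaIntegrand_intOn ha0
  have hsub : Set.Ioc s (s + 1) ⊆ Set.Ioi 0 := fun t ht => lt_trans hs ht.1
  have h1 : s ^ (a - 1) * Real.exp (-(s + 1))
      ≤ ∫ t in Set.Ioc s (s + 1), t ^ (a - 1) * Real.exp (-t) := by
    have hmono : (∫ _t in Set.Ioc s (s + 1), s ^ (a - 1) * Real.exp (-(s + 1)))
        ≤ ∫ t in Set.Ioc s (s + 1), t ^ (a - 1) * Real.exp (-t) := by
      apply MeasureTheory.setIntegral_mono_on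
      · exact integrableOn_const measure_Ioc_lt_top.ne
      · exact hint.mono_set hsub
      · exact measurableSet_Ioc
      · intro t ht
        have ht0 : 0 < t := lt_trans hs ht.1
        apply mul_le_mul
        · exact Real.rpow_le_rpow hs.le ht.1.le (by linarith)
        · exact Real.exp_le_exp.2 (by linarith [ht.2])
        · exact (Real.exp_pos _).le
        · exact Real.rpow_nonneg ht0.le _
    have heq : (∫ _t in Set.Ioc s (s + 1), s ^ (a - 1) * Real.exp (-(s + 1)))
        = s ^ (a - 1) * Real.exp (-(s + 1)) := by
      rw [MeasureTheory.setIntegral_const, MeasureTheory.measureReal_def, Real.volume_Ioc, smul_eq_mul]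
      rw [show s + 1 - s = 1 by ring, ENNReal.toReal_ofReal one_pos.le, one_mul]
    linarith [heq ▸ hmono]
  have h2 : (∫ t in Set.Ioc s (s + 1), t ^ (a - 1) * Real.exp (-t))
      ≤ ∫ t in Set.Ioi 0, t ^ (a - 1) * Real.exp (-t) := by
    apply MeasureTheory.setIntegral_mono_set hint
    · filter_upwards [MeasureTheory.self_mem_ae_restrict measurableSet_Ioi] with t ht
      exact mul_nonneg (Real.rpow_nonneg (le_of_lt ht) _) (Real.exp_nonneg _)
    · exact HasSubset.Subset.eventuallyLE hsub
  have hcomm : (∫ t in Set.Ioi 0, Real.exp (-t) * t ^ (a - 1))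
      = ∫ t in Set.Ioi 0, t ^ (a - 1) * Real.exp (-t) := by
    congr 1; ext t; ring
  rw [Real.Gamma_eq_integral ha0, hcomm]
  linarith

open Real in
lemma quot_eq {α γ a : ℝ} (hα : 0 < α) (hγ : 0 < γ) (ha : 0 < a) :
    (α * a) ^ (a - 1) * Real.exp (-(α * a)) * (α * a)
        / ((γ * a) ^ (a - 1) * Real.exp (-(γ * a + 1)))
      = Real.exp 1 * (γ * a) * (α / γ * Real.exp (γ - α)) ^ a := by
  have hαa : (0 : ℝ) < α * a := mul_pos hα ha
  have hγa : (0 : ℝ) < γ * a := mul_pos hγ ha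
  have hne : (γ * a) ^ (a - 1) * Real.exp (-(γ * a + 1)) ≠ 0 :=
    (mul_pos (Real.rpow_pos_of_pos hγa _) (Real.exp_pos _)).ne'
  rw [div_eq_iff hne]
  have e1 : (α / γ * Real.exp (γ - α)) ^ a
      = (α / γ) ^ a * Real.exp ((γ - α) * a) := by
    rw [Real.mul_rpow (by positivity) (Real.exp_pos _).le, ← Real.exp_mul]
  have e2 : (α * a) ^ (a - 1) * (α * a) = (α * a) ^ a := by
    rw [← Real.rpow_add_one hαa.ne' (a - 1), sub_add_cancel]
  have e3 : (γ * a) ^ (a - 1) * (γ * a) = (γ * a) ^ a := by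
    rw [← Real.rpow_add_one hγa.ne' (a - 1), sub_add_cancel]
  have e4 : (α / γ) ^ a * (γ * a) ^ a = (α * a) ^ a := by
    rw [← Real.mul_rpow (by positivity) hγa.le]
    congr 1
    field_simp
  calc (α * a) ^ (a - 1) * Real.exp (-(α * a)) * (α * a)
      = (α * a) ^ a * Real.exp (-(α * a)) := by rw [← e2]; ring
    _ = (α / γ) ^ a * (γ * a) ^ a * Real.exp (-(α * a)) := by rw [e4]
    _ = (α / γ) ^ a * ((γ * a) ^ (a - 1) * (γ * a)) * Real.exp (-(α * a)) := by rw [e3]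
    _ = Real.exp 1 * (γ * a) * ((α / γ) ^ a * Real.exp ((γ - α) * a))
          * ((γ * a) ^ (a - 1) * Real.exp (-(γ * a + 1))) := by
        have hE : Real.exp 1 * Real.exp ((γ - α) * a) * Real.exp (-(γ * a + 1))
            = Real.exp (-(α * a)) := by
          rw [← Real.exp_add, ← Real.exp_add]
          congr 1
          ring
        rw [← hE]
        ring
  rw [e1]

open Real in
lemma aux_tendsto_zero {c k : ℝ} (hc : 0 < c) (hc1 : c < 1) (hk : 0 < k) :
    Tendsto (fun L : ℝ => k * L * c ^ (k * L)) atTop (nhds 0) := by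
  set p : ℝ := -Real.log c with hp
  have hp0 : 0 < p := by
    simp only [hp, Left.nonneg_neg_iff, neg_pos]
    exact Real.log_neg hc hc1
  have h1 : Tendsto (fun x : ℝ => x ^ (1 : ℕ) * Real.exp (-x)) atTop (nhds 0) :=
    Real.tendsto_pow_mul_exp_neg_atTop_nhds_zero 1
  have h2 : Tendsto (fun L : ℝ => p * (k * L)) atTop atTop := by
    apply Tendsto.const_mul_atTop hp0
    exact Tendsto.const_mul_atTop hk tendsto_id
  have h3 := h1.comp h2
  have h4 : Tendsto (fun L : ℝ => (1 / p) * (p * (k * L) * Real.exp (-(p * (k * L)))))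
      atTop (nhds ((1 / p) * 0)) := by
    apply Tendsto.const_mul
    simpa [Function.comp_def] using h3
  rw [mul_zero] at h4
  apply h4.congr
  intro L
  have hcy : c ^ (k * L) = Real.exp (Real.log c * (k * L)) := by
    rw [Real.rpow_def_of_pos hc]
  rw [hcy, show Real.log c * (k * L) = -(p * (k * L)) by rw [hp]; ring]
  field_simp

theorem rL_tendsto_one (α β m : ℝ) (hα0 : 0 < α) (hα1 : α < 1) (hβ : 0 < β)
    (hm : 0 < m) :
    Tendsto (fun L : ℝ =>
        (Real.log (1 + α * β * L) / Real.log (1 + β * L)) *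
          normUpperIncGamma (m * L) (α * m * L)) atTop (nhds 1) := by
  -- Part 1: the log ratio tends to 1
  have hden : Tendsto (fun L : ℝ => Real.log (1 + β * L)) atTop atTop := by
    apply Real.tendsto_log_atTop.comp
    apply tendsto_atTop_add_const_left
    exact Tendsto.const_mul_atTop hβ tendsto_id
  have h1 : Tendsto (fun L : ℝ => (1 + α * β * L) / (1 + β * L)) atTop (nhds α) := by
    have heq : (fun L : ℝ => (1 + α * β * L) / (1 + β * L)) =ᶠ[atTop]
        (fun L : ℝ => (1 / L + α * β) / (1 / L + β)) := by
      filter_upwards [eventually_gt_atTop 0] with L hL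
      rw [div_eq_div_iff (by positivity) (by positivity)]
      field_simp
    rw [tendsto_congr' heq]
    have hinv' : Tendsto (fun L : ℝ => 1 / L) atTop (nhds (0 : ℝ)) := by
      simpa [one_div] using (tendsto_inv_atTop_zero (𝕜 := ℝ))
    have hdiv : Tendsto (fun L : ℝ => (1 / L + α * β) / (1 / L + β)) atTop
        (nhds ((0 + α * β) / (0 + β))) :=
      Tendsto.div (hinv'.add_const _) (hinv'.add_const _) (by simpa using hβ.ne')
    have hval : (0 + α * β) / (0 + β) = α := by
      field_simp
      ring
    rwa [hval] at hdiv
  have hdiff : Tendsto (fun L : ℝ => Real.log (1 + α * β * L) - Real.log (1 + β * L))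
      atTop (nhds (Real.log α)) := by
    have hcont := (Real.continuousAt_log hα0.ne').tendsto.comp h1
    apply hcont.congr'
    filter_upwards [eventually_gt_atTop 0] with L hL
    have h0 : (0 : ℝ) < 1 + α * β * L := by positivity
    have h0' : (0 : ℝ) < 1 + β * L := by positivity
    simp only [Function.comp]
    rw [Real.log_div h0.ne' h0'.ne']
  have hq0 : Tendsto (fun L : ℝ =>
      (Real.log (1 + α * β * L) - Real.log (1 + β * L)) / Real.log (1 + β * L))
      atTop (nhds 0) := hdiff.div_atTop hden
  have hlog : Tendsto (fun L : ℝ => Real.log (1 + α * β * L) / Real.log (1 + β * L))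
      atTop (nhds 1) := by
    have := hq0.add_const 1
    rw [zero_add] at this
    apply this.congr'
    filter_upwards [hden.eventually (eventually_gt_atTop 0)] with L hL
    field_simp
    ring
  -- Part 2: the normalized incomplete gamma tends to 1
  set γ : ℝ := (1 + α) / 2 with hγdef
  have hγ0 : 0 < γ := by rw [hγdef]; linarith
  have hαγ : α < γ := by rw [hγdef]; linarith
  have hγ1 : γ < 1 := by rw [hγdef]; linarith
  set c : ℝ := α / γ * Real.exp (γ - α) with hcdef
  have hc0 : 0 < c := by positivity
  have hc1 : c < 1 := by
    rw [← Real.log_neg_iff hc0]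
    rw [hcdef, Real.log_mul (by positivity) (Real.exp_pos _).ne', Real.log_exp]
    have h := Real.log_le_sub_one_of_pos (div_pos hα0 hγ0)
    have hq : α / γ - 1 = (α - γ) / γ := by field_simp
    have hlt : (α - γ) / γ < α - γ := by
      rw [div_lt_iff₀ hγ0]
      nlinarith
    linarith [hq ▸ h]
  set r : ℝ → ℝ := fun L =>
    (∫ t in Set.Ioc 0 (α * m * L), t ^ (m * L - 1) * Real.exp (-t)) / Real.Gamma (m * L)
    with hrdef
  have hg0 : Tendsto (fun L : ℝ => Real.exp 1 * (γ * (m * L)) * c ^ (m * L))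
      atTop (nhds 0) := by
    have h := (aux_tendsto_zero hc0 hc1 hm).const_mul (Real.exp 1 * γ)
    rw [mul_zero] at h
    apply h.congr
    intro L
    ring
  have hr0 : Tendsto r atTop (nhds 0) := by
    apply squeeze_zero' (g := fun L => Real.exp 1 * (γ * (m * L)) * c ^ (m * L)) _ _ hg0
    · filter_upwards [eventually_gt_atTop 0] with L hL
      have ha0 : 0 < m * L := by positivity
      exact div_nonneg (lower_nonneg _ _) (Real.Gamma_pos_of_pos ha0).le
    · filter_upwards [eventually_ge_atTop (max (1 / m) (1 / ((1 - α) * m)))] with L hL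
      have hL1 : 1 / m ≤ L := le_trans (le_max_left _ _) hL
      have hL2 : 1 / ((1 - α) * m) ≤ L := le_trans (le_max_right _ _) hL
      have hL0 : 0 < L := lt_of_lt_of_le (by positivity) hL1
      set a : ℝ := m * L with hadef
      have ha1 : 1 ≤ a := by
        rw [hadef]
        rw [div_le_iff₀ hm] at hL1
        linarith [hL1]
      have ha0 : 0 < a := lt_of_lt_of_le one_pos ha1
      have hx0 : 0 < α * a := by positivity
      have hxa : α * a ≤ a - 1 := by
        rw [div_le_iff₀ (by nlinarith : (0:ℝ) < (1 - α) * m)] at hL2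
        rw [hadef]
        nlinarith
      have hΓpos : 0 < Real.Gamma a := Real.Gamma_pos_of_pos ha0
      have hD : γ * a > 0 := by positivity
      have hDen : 0 < (γ * a) ^ (a - 1) * Real.exp (-(γ * a + 1)) :=
        mul_pos (Real.rpow_pos_of_pos hD _) (Real.exp_pos _)
      have hΓge : (γ * a) ^ (a - 1) * Real.exp (-(γ * a + 1)) ≤ Real.Gamma a :=
        gamma_ge ha1 hD
      have hnum : (∫ t in Set.Ioc 0 (α * a), t ^ (a - 1) * Real.exp (-t))
          ≤ (α * a) ^ (a - 1) * Real.exp (-(α * a)) * (α * a) :=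
        lower_le ha0 hx0 hxa
      have hnum0 : 0 ≤ (α * a) ^ (a - 1) * Real.exp (-(α * a)) * (α * a) := by positivity
      have step1 : r L ≤ ((α * a) ^ (a - 1) * Real.exp (-(α * a)) * (α * a)) / Real.Gamma a := by
        rw [hrdef]
        simp only
        rw [show α * m * L = α * a by rw [hadef]; ring, ← hadef]
        exact (div_le_div_iff_of_pos_right hΓpos).2 hnum
      have step2 : ((α * a) ^ (a - 1) * Real.exp (-(α * a)) * (α * a)) / Real.Gamma a
          ≤ ((α * a) ^ (a - 1) * Real.exp (-(α * a)) * (α * a))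
              / ((γ * a) ^ (a - 1) * Real.exp (-(γ * a + 1))) :=
        div_le_div_of_nonneg_left hnum0 hDen hΓge
      calc r L ≤ _ := step1
        _ ≤ _ := step2
        _ = Real.exp 1 * (γ * a) * c ^ a := quot_eq hα0 hγ0 ha0
        _ = Real.exp 1 * (γ * (m * L)) * c ^ (m * L) := by rw [hadef]
  have hQ : Tendsto (fun L : ℝ => normUpperIncGamma (m * L) (α * m * L)) atTop (nhds 1) := by
    have h := (tendsto_const_nhds (x := (1 : ℝ)) (f := atTop)).sub hr0
    rw [sub_zero] at h
    apply h.congr'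
    filter_upwards [eventually_gt_atTop 0] with L hL
    have ha0 : 0 < m * L := by positivity
    have hx0 : 0 < α * m * L := by positivity
    have hΓpos : 0 < Real.Gamma (m * L) := Real.Gamma_pos_of_pos ha0
    have hsplit := gamma_split ha0 hx0
    rw [hrdef]
    simp only
    rw [normUpperIncGamma]
    rw [show upperIncGamma (m * L) (α * m * L)
        = Real.Gamma (m * L) - ∫ t in Set.Ioc 0 (α * m * L), t ^ (m * L - 1) * Real.exp (-t)
        from by linarith [hsplit]]
    field_simp
  have := hlog.mul hQ
  rw [mul_one] at this
  exact this
end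

section
/- Let γ_L be gamma-distributed with shape mL and scale θ (m, θ > 0), and let μ_L = θmL. Then for any fixed P > 0 and N₀ > 0, the ratio E[log(1 + (P/N₀)γ_L)] / log(1 + (P/N₀)μ_L) tends to 1 as L → ∞. -/
open MeasureTheory ProbabilityTheory Filter Real Set
open scoped ENNReal NNReal

namespace GammaAux
variable {a r c ε : ℝ}




lemma gamma_ae_pos (ha : 0 < a) (hr : 0 < r) : ∀ᵐ x ∂(gammaMeasure a r), 0 < x := by
  rw [ae_iff]
  have h1 : {x : ℝ | ¬ 0 < x} = Iic 0 := by ext x; simp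
  rw [h1, gammaMeasure, withDensity_apply _ measurableSet_Iic]
  rw [setLIntegral_congr (Filter.EventuallyEq.symm Iio_ae_eq_Iic)]
  exact lintegral_gammaPDF_of_nonpos le_rfl

lemma gamma_integral_eq (ha : 0 < a) (hr : 0 < r) (g : ℝ → ℝ) :
    ∫ x, g x ∂(gammaMeasure a r) = ∫ x, gammaPDFReal a r x * g x := by
  have hmeas : Measurable fun x => Real.toNNReal (gammaPDFReal a r x) :=
    (measurable_gammaPDFReal a r).real_toNNReal
  have hme : gammaMeasure a r
      = volume.withDensity (fun x => ((Real.toNNReal (gammaPDFReal a r x) : ℝ≥0) : ℝ≥0∞)) := rfl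
  rw [hme, integral_withDensity_eq_integral_smul hmeas]
  refine integral_congr_ae (Filter.Eventually.of_forall fun x => ?_)
  simp [NNReal.smul_def, Real.coe_toNNReal _ (gammaPDFReal_nonneg ha hr x)]

lemma gamma_integrable_iff (ha : 0 < a) (hr : 0 < r) (g : ℝ → ℝ) :
    Integrable g (gammaMeasure a r) ↔ Integrable (fun x => gammaPDFReal a r x * g x) := by
  have hmeas : Measurable fun x => Real.toNNReal (gammaPDFReal a r x) :=
    (measurable_gammaPDFReal a r).real_toNNReal
  have hme : gammaMeasure a r
      = volume.withDensity (fun x => ((Real.toNNReal (gammaPDFReal a r x) : ℝ≥0) : ℝ≥0∞)) := rfl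
  rw [hme, integrable_withDensity_iff_integrable_smul hmeas]
  apply integrable_congr
  refine Filter.Eventually.of_forall fun x => ?_
  simp [NNReal.smul_def, Real.coe_toNNReal _ (gammaPDFReal_nonneg ha hr x)]

lemma ae_indicator (g : ℝ → ℝ) :
    (fun x => gammaPDFReal a r x * g x)
      =ᵐ[volume] (Ioi (0:ℝ)).indicator (fun x => gammaPDFReal a r x * g x) := by
  have h0 : ∀ᵐ x : ℝ, x ≠ 0 := by
    rw [ae_iff]
    have : {x : ℝ | ¬ x ≠ 0} = {0} := by ext x; simp
    simp [this]
  filter_upwards [h0] with x hx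
  rcases lt_trichotomy x 0 with h | h | h
  · simp [Set.indicator_of_notMem (by simpa using h.le.not_gt : x ∉ Ioi (0:ℝ)),
      gammaPDFReal, not_le.mpr h]
  · exact absurd h hx
  · simp [Set.indicator_of_mem (mem_Ioi.mpr h)]

lemma pdf_mul_pow (n : ℕ) {x : ℝ} (hx : 0 < x) :
    gammaPDFReal a r x * x ^ n
      = r ^ a / Gamma a * (x ^ (a + n - 1) * exp (-(r * x))) := by
  rw [gammaPDFReal, if_pos hx.le]
  have h : (x:ℝ) ^ (a + (n:ℝ) - 1) = x ^ (a-1) * x ^ (n:ℕ) := by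
    rw [← Real.rpow_natCast x n, ← Real.rpow_add hx]; ring_nf
  rw [h]; ring

lemma integrableOn_pdf_mul_pow (ha : 0 < a) (hr : 0 < r) (n : ℕ) :
    IntegrableOn (fun x => gammaPDFReal a r x * x ^ n) (Ioi 0) volume := by
  have base : IntegrableOn (fun x : ℝ => x ^ (a + n - 1) * exp (-r * x ^ (1:ℝ))) (Ioi 0) :=
    integrableOn_rpow_mul_exp_neg_mul_rpow (by push_cast; linarith) one_pos hr
  have base2 : IntegrableOn
      (fun x : ℝ => r ^ a / Gamma a * (x ^ (a + n - 1) * exp (-(r * x)))) (Ioi 0) := by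
    refine IntegrableOn.congr_fun (base.const_mul (r ^ a / Gamma a))
      (fun x hx => by rw [Real.rpow_one, neg_mul]) measurableSet_Ioi
  exact IntegrableOn.congr_fun base2 (fun x hx => (pdf_mul_pow n hx).symm) measurableSet_Ioi

lemma integrable_pow_gamma (ha : 0 < a) (hr : 0 < r) (n : ℕ) :
    Integrable (fun x : ℝ => x ^ n) (gammaMeasure a r) := by
  rw [gamma_integrable_iff ha hr]
  exact (((integrableOn_pdf_mul_pow ha hr n).integrable_indicator
    measurableSet_Ioi).congr (ae_indicator _).symm)

lemma gamma_integral_pow (ha : 0 < a) (hr : 0 < r) (n : ℕ) :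
    ∫ x, (x : ℝ) ^ n ∂(gammaMeasure a r) = Gamma (a + n) / Gamma a / r ^ n := by
  rw [gamma_integral_eq ha hr, integral_congr_ae (ae_indicator _),
    integral_indicator measurableSet_Ioi,
    setIntegral_congr_fun measurableSet_Ioi (fun x hx => pdf_mul_pow n (mem_Ioi.mp hx)),
    MeasureTheory.integral_const_mul, integral_rpow_mul_exp_neg_mul_Ioi (by push_cast; linarith) hr]
  have h1 : (1/r) ^ (a + (n:ℝ)) = (r ^ (a + (n:ℝ)))⁻¹ := by
    rw [one_div, Real.inv_rpow hr.le]
  have h3 : r ^ (a + (n:ℝ)) = r ^ a * r ^ n := by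
    rw [Real.rpow_add hr, Real.rpow_natCast]
  rw [h1]
  field_simp
  rw [h3]

lemma integrable_id_gamma (ha : 0 < a) (hr : 0 < r) :
    Integrable (fun x : ℝ => x) (gammaMeasure a r) := by
  simpa using integrable_pow_gamma ha hr 1

lemma gamma_mean (ha : 0 < a) (hr : 0 < r) :
    ∫ x, x ∂(gammaMeasure a r) = a / r := by
  have h := gamma_integral_pow ha hr 1
  simp only [pow_one, Nat.cast_one] at h
  rw [h, Real.Gamma_add_one ha.ne']
  have hg := Real.Gamma_pos_of_pos ha
  field_simp

lemma gamma_sq (ha : 0 < a) (hr : 0 < r) :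
    ∫ x, x ^ 2 ∂(gammaMeasure a r) = a * (a + 1) / r ^ 2 := by
  rw [gamma_integral_pow ha hr 2]
  have h2 : a + (2:ℕ) = (a + 1) + 1 := by push_cast; ring
  rw [h2, Real.Gamma_add_one (by linarith), Real.Gamma_add_one ha.ne']
  have := Real.Gamma_pos_of_pos ha
  field_simp

lemma integrable_var_gamma (ha : 0 < a) (hr : 0 < r) (μ : ℝ) :
    Integrable (fun x : ℝ => (x - μ) ^ 2) (gammaMeasure a r) := by
  haveI := isProbabilityMeasure_gammaMeasure ha hr
  have h : (fun x : ℝ => (x - μ) ^ 2) = fun x : ℝ => x ^ 2 - (2*μ)*x + μ^2 := by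
    funext x; ring
  rw [h]
  exact (((integrable_pow_gamma ha hr 2).sub
    ((integrable_id_gamma ha hr).const_mul (2*μ))).add (integrable_const _))

lemma gamma_var (ha : 0 < a) (hr : 0 < r) :
    ∫ x, (x - a/r) ^ 2 ∂(gammaMeasure a r) = a / r ^ 2 := by
  haveI := isProbabilityMeasure_gammaMeasure ha hr
  have h : (fun x : ℝ => (x - a/r) ^ 2) = fun x : ℝ => x ^ 2 - (2*(a/r))*x + (a/r)^2 := by
    funext x; ring
  have hsub : Integrable (fun x : ℝ => x ^ 2 - 2*(a/r)*x) (gammaMeasure a r) :=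
    (integrable_pow_gamma ha hr 2).sub ((integrable_id_gamma ha hr).const_mul (2*(a/r)))
  rw [h, integral_add hsub (integrable_const _),
    integral_sub (integrable_pow_gamma ha hr 2)
      ((integrable_id_gamma ha hr).const_mul (2*(a/r))),
    MeasureTheory.integral_const_mul, gamma_sq ha hr, gamma_mean ha hr, integral_const]
  simp only [probReal_univ, measure_univ, ENNReal.toReal_one, smul_eq_mul, one_mul]
  field_simp
  ring



lemma point_upper {c μ x : ℝ} (hc : 0 < c) (hμ : 0 < μ) (hx : 0 < x) :
    Real.log (1 + c*x) ≤ Real.log (1 + c*μ) + c/(1+c*μ)*(x-μ) := by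
  have h1 : (0:ℝ) < 1 + c*μ := by positivity
  have h2 : (0:ℝ) < 1 + c*x := by positivity
  have h3 := Real.log_le_sub_one_of_pos (show (0:ℝ) < (1+c*x)/(1+c*μ) by positivity)
  rw [Real.log_div h2.ne' h1.ne'] at h3
  have h4 : (1+c*x)/(1+c*μ) - 1 = c/(1+c*μ)*(x-μ) := by field_simp; ring
  linarith [h4 ▸ h3]

lemma point_lower {c μ ε x : ℝ} (hc : 0 < c) (hμ : 0 < μ) (hε : 0 < ε) (hx : 0 < x) :
    Real.log (1 + (1+ε)*c*μ) / ((1+ε)*μ) * (x - (x-μ)^2/(ε*μ)) ≤ Real.log (1 + c*x) := by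
  have hApos : (0:ℝ) < 1 + ε := by linarith
  have hB : 0 < (1+ε)*c*μ := by positivity
  have hK0 : (0:ℝ) ≤ Real.log (1 + (1+ε)*c*μ) / ((1+ε)*μ) :=
    div_nonneg (Real.log_nonneg (by linarith)) (by positivity)
  rcases le_or_gt x ((1+ε)*μ) with hcase | hcase
  · set t := x/((1+ε)*μ) with ht
    have ht0 : 0 < t := by positivity
    have ht1 : t ≤ 1 := by rw [ht, div_le_one (by positivity)]; exact hcase
    have hconc := (strictConcaveOn_log_Ioi.concaveOn).2 (mem_Ioi.mpr one_pos)
      (mem_Ioi.mpr (show (0:ℝ) < 1 + (1+ε)*c*μ by positivity))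
      (by linarith : (0:ℝ) ≤ 1 - t) ht0.le (by ring)
    simp only [smul_eq_mul, Real.log_one, mul_one, mul_zero] at hconc
    have harg : 1 - t + t * (1 + (1+ε)*c*μ) = 1 + c*x := by
      have h5 : t * ((1+ε)*c*μ) = c*x := by rw [ht]; field_simp
      nlinarith [h5]
    rw [harg] at hconc
    have step1 : x - (x-μ)^2/(ε*μ) ≤ x := by
      have : 0 ≤ (x-μ)^2/(ε*μ) := by positivity
      linarith
    have step2 : Real.log (1 + (1+ε)*c*μ) / ((1+ε)*μ) * x
        = t * Real.log (1 + (1+ε)*c*μ) := by rw [ht]; ring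
    calc Real.log (1 + (1+ε)*c*μ) / ((1+ε)*μ) * (x - (x-μ)^2/(ε*μ))
        ≤ Real.log (1 + (1+ε)*c*μ) / ((1+ε)*μ) * x :=
          mul_le_mul_of_nonneg_left step1 hK0
      _ = t * Real.log (1 + (1+ε)*c*μ) := step2
      _ ≤ Real.log (1 + c*x) := by linarith [hconc]
  · have h1 : x - (x-μ)^2/(ε*μ) ≤ (1+ε)*μ := by
      have h2 : (x - (1+ε)*μ) * (ε*μ) ≤ (x-μ)^2 := by nlinarith [sq_nonneg (x - μ - ε*μ)]
      have h3 : x - (1+ε)*μ ≤ (x-μ)^2/(ε*μ) := by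
        rw [le_div_iff₀ (by positivity)]; linarith
      linarith
    calc Real.log (1 + (1+ε)*c*μ) / ((1+ε)*μ) * (x - (x-μ)^2/(ε*μ))
        ≤ Real.log (1 + (1+ε)*c*μ) / ((1+ε)*μ) * ((1+ε)*μ) :=
          mul_le_mul_of_nonneg_left h1 hK0
      _ = Real.log (1 + (1+ε)*c*μ) := by field_simp
      _ ≤ Real.log (1 + c*x) := Real.log_le_log (by positivity) (by nlinarith)




lemma integrable_log_gamma (ha : 0 < a) (hr : 0 < r) (hc : 0 < c) :
    Integrable (fun x : ℝ => Real.log (1 + c*x)) (gammaMeasure a r) := by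
  refine ((integrable_id_gamma ha hr).const_mul c).mono' ?_ ?_
  · exact (Real.measurable_log.comp ((measurable_id.const_mul c).const_add 1)).aestronglyMeasurable
  · filter_upwards [gamma_ae_pos ha hr] with x hx
    have h2 : (0:ℝ) ≤ Real.log (1 + c*x) := Real.log_nonneg (by nlinarith)
    rw [Real.norm_of_nonneg h2]
    have := Real.log_le_sub_one_of_pos (show (0:ℝ) < 1 + c*x by positivity)
    linarith

lemma log_integral_le (ha : 0 < a) (hr : 0 < r) (hc : 0 < c) :
    ∫ x, Real.log (1 + c*x) ∂(gammaMeasure a r) ≤ Real.log (1 + c*(a/r)) := by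
  haveI := isProbabilityMeasure_gammaMeasure ha hr
  have hμ : 0 < a/r := by positivity
  have hint1 : Integrable (fun x : ℝ => c/(1+c*(a/r))*(x - a/r)) (gammaMeasure a r) :=
    ((integrable_id_gamma ha hr).sub (integrable_const _)).const_mul _
  have hintsum : Integrable
      (fun x : ℝ => Real.log (1 + c*(a/r)) + c/(1+c*(a/r))*(x - a/r)) (gammaMeasure a r) :=
    (integrable_const _).add hint1
  have hmono := integral_mono_ae (integrable_log_gamma ha hr hc) hintsum
    (by filter_upwards [gamma_ae_pos ha hr] with x hx using point_upper hc hμ hx)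
  rw [integral_add (integrable_const _) hint1, integral_const,
    MeasureTheory.integral_const_mul,
    integral_sub (integrable_id_gamma ha hr) (integrable_const _), integral_const,
    gamma_mean ha hr] at hmono
  simpa using hmono

lemma le_log_integral (ha : 0 < a) (hr : 0 < r) (hc : 0 < c) (hε : 0 < ε) :
    Real.log (1 + (1+ε)*c*(a/r)) / ((1+ε)*(a/r)) * (a/r - (a/r^2)/(ε*(a/r)))
      ≤ ∫ x, Real.log (1 + c*x) ∂(gammaMeasure a r) := by
  haveI := isProbabilityMeasure_gammaMeasure ha hr
  have hμ : 0 < a/r := by positivity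
  set K := Real.log (1 + (1+ε)*c*(a/r)) / ((1+ε)*(a/r)) with hK
  have hint1 : Integrable (fun x : ℝ => (x - a/r)^2 / (ε*(a/r))) (gammaMeasure a r) := by
    simpa [div_eq_mul_inv] using (integrable_var_gamma ha hr (a/r)).mul_const (ε*(a/r))⁻¹
  have hint2 : Integrable (fun x : ℝ => x - (x - a/r)^2 / (ε*(a/r))) (gammaMeasure a r) :=
    (integrable_id_gamma ha hr).sub hint1
  have hmono := integral_mono_ae (hint2.const_mul K) (integrable_log_gamma ha hr hc)
    (by filter_upwards [gamma_ae_pos ha hr] with x hx using point_lower hc hμ hε hx)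
  rw [MeasureTheory.integral_const_mul, integral_sub (integrable_id_gamma ha hr) hint1,
    gamma_mean ha hr] at hmono
  have hdiv : ∫ x, (x - a/r)^2 / (ε*(a/r)) ∂(gammaMeasure a r) = (a/r^2) / (ε*(a/r)) := by
    rw [show (fun x : ℝ => (x - a/r)^2 / (ε*(a/r)))
        = fun x : ℝ => (ε*(a/r))⁻¹ * (x - a/r)^2 by funext x; ring,
      MeasureTheory.integral_const_mul, gamma_var ha hr]
    ring
  rw [hdiv] at hmono
  exact hmono


end GammaAux

open GammaAux


theorem ergodic_rate_ratio_tendsto_one (m θ P N₀ : ℝ)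
    (hm : 0 < m) (hθ : 0 < θ) (hP : 0 < P) (hN : 0 < N₀) :
    Tendsto (fun L : ℕ =>
        (∫ x, Real.log (1 + (P / N₀) * x) ∂(gammaMeasure (m * L) θ⁻¹)) /
          Real.log (1 + (P / N₀) * (θ * m * L))) atTop (nhds 1) := by
  set c := P / N₀ with hcdef
  have hc : 0 < c := div_pos hP hN
  have hrinv : 0 < θ⁻¹ := inv_pos.mpr hθ
  have hsq : Tendsto (fun L : ℕ => Real.sqrt L) atTop atTop := by
    refine tendsto_atTop.mpr fun b => eventually_atTop.mpr ⟨Nat.ceil (b^2), fun L hL => ?_⟩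
    have h1 : b^2 ≤ (L:ℝ) := le_trans (Nat.le_ceil _) (by exact_mod_cast hL)
    calc b ≤ |b| := le_abs_self b
      _ = Real.sqrt (b^2) := (Real.sqrt_sq_eq_abs b).symm
      _ ≤ Real.sqrt L := Real.sqrt_le_sqrt h1
  have hms : Tendsto (fun L : ℕ => m * Real.sqrt L) atTop atTop :=
    hsq.const_mul_atTop hm
  have h1s : Tendsto (fun L : ℕ => (Real.sqrt L)⁻¹) atTop (nhds 0) := hsq.inv_tendsto_atTop
  have h1ms : Tendsto (fun L : ℕ => (m * Real.sqrt L)⁻¹) atTop (nhds 0) :=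
    hms.inv_tendsto_atTop
  have hg : Tendsto (fun L : ℕ => (1 - (m*Real.sqrt L)⁻¹)/(1 + (Real.sqrt L)⁻¹))
      atTop (nhds 1) := by
    have h : Tendsto (fun L : ℕ => (1 - (m*Real.sqrt L)⁻¹)/(1 + (Real.sqrt L)⁻¹))
        atTop (nhds ((1 - 0)/(1 + 0))) :=
      ((tendsto_const_nhds.sub h1ms).div (tendsto_const_nhds.add h1s)
        (by norm_num : (1:ℝ) + 0 ≠ 0))
    simpa using h
  refine tendsto_of_tendsto_of_tendsto_of_le_of_le' hg tendsto_const_nhds ?_ ?_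
  · -- lower bound
    filter_upwards [eventually_ge_atTop 1, hms.eventually_gt_atTop 1] with L hL1 hmL
    have hLpos : (0:ℝ) < L := by exact_mod_cast hL1
    have hs : 0 < Real.sqrt L := Real.sqrt_pos.mpr hLpos
    have hss : Real.sqrt L * Real.sqrt L = (L:ℝ) := Real.mul_self_sqrt hLpos.le
    have ha : 0 < m * (L:ℝ) := by positivity
    set ε := (Real.sqrt L)⁻¹ with hεdef
    have hε : 0 < ε := by positivity
    set δ := (m * Real.sqrt L)⁻¹ with hδdef
    have hδ : 0 < δ := by positivity
    have hδ1 : δ < 1 := by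
      rw [hδdef, inv_lt_one_iff₀]; right; exact hmL
    set μ := θ * m * (L:ℝ) with hμdef
    have hμ : 0 < μ := by positivity
    have hD : 0 < Real.log (1 + c * μ) := Real.log_pos (by nlinarith)
    have hμeq : (m*(L:ℝ))/θ⁻¹ = μ := by rw [hμdef]; field_simp
    have hlow := le_log_integral ha hrinv hc hε
    rw [hμeq] at hlow
    have hkey : μ - ((m*(L:ℝ))/(θ⁻¹)^2)/(ε*μ) = μ*(1-δ) := by
      rw [hμdef, hδdef, hεdef]
      field_simp
      nlinarith [hss]
    rw [hkey] at hlow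
    have hlogmono : Real.log (1 + c * μ) ≤ Real.log (1 + (1+ε)*c*μ) :=
      Real.log_le_log (by positivity) (by nlinarith [mul_pos hc hμ, mul_pos hε (mul_pos hc hμ)])
    rw [le_div_iff₀ hD]
    calc (1 - δ)/(1 + ε) * Real.log (1 + c*μ)
        ≤ (1 - δ)/(1 + ε) * Real.log (1 + (1+ε)*c*μ) := by
          exact mul_le_mul_of_nonneg_left hlogmono
            (div_nonneg (by linarith) (by linarith))
      _ = Real.log (1 + (1+ε)*c*μ) / ((1+ε)*μ) * (μ*(1-δ)) := by
          field_simp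
      _ ≤ _ := hlow
  · -- upper bound
    filter_upwards [eventually_ge_atTop 1] with L hL1
    have hLpos : (0:ℝ) < L := by exact_mod_cast hL1
    have ha : 0 < m * (L:ℝ) := by positivity
    have hμ : 0 < θ * m * (L:ℝ) := by positivity
    have hD : 0 < Real.log (1 + c * (θ*m*(L:ℝ))) := Real.log_pos (by nlinarith)
    have hup := log_integral_le ha hrinv hc
    have hμeq : (m*(L:ℝ))/θ⁻¹ = θ*m*(L:ℝ) := by field_simp
    rw [hμeq] at hup
    exact (div_le_one hD).mpr hup
end

section
/- Let γ_L be gamma-distributed with shape mL and scale θ. For every ε > 0 there exists L₀ such that for all L > L₀, log(1 + (P/N₀)θmL) − E[log(1 + (P/N₀)γ_L)] < ε · log(1 + (P/N₀)θmL). -/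
open MeasureTheory ProbabilityTheory
open Set

lemma integrableOn_aux {p r : ℝ} (hp : 0 < p) (hr : 0 < r) :
    IntegrableOn (fun x : ℝ => x ^ (p-1) * Real.exp (-(r*x))) (Ioi 0) := by
  have := integrableOn_rpow_mul_exp_neg_mul_rpow (s := p-1) (p := 1) (b := r)
    (by linarith) zero_lt_one hr
  simpa [Real.rpow_one, neg_mul] using this

lemma gamma_mom {a r : ℝ} (ha : 0 < a) (hr : 0 < r) {j : ℝ} (hj : 0 ≤ j) :
    IntegrableOn (fun x => x ^ j * gammaPDFReal a r x) (Ioi 0) ∧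
    ∫ x in Ioi 0, x ^ j * gammaPDFReal a r x
      = Real.Gamma (a+j) / Real.Gamma a * (1/r) ^ j := by
  have haj : 0 < a + j := by linarith
  have hcong : ∀ x ∈ Ioi (0:ℝ), x ^ j * gammaPDFReal a r x
      = r ^ a / Real.Gamma a * (x ^ (a+j-1) * Real.exp (-(r*x))) := by
    intro x hx
    have hx0 : (0:ℝ) < x := hx
    rw [gammaPDFReal, if_pos hx0.le]
    rw [show a + j - 1 = j + (a-1) by ring, Real.rpow_add hx0]
    ring
  constructor
  · exact MeasureTheory.IntegrableOn.congr_fun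
      ((integrableOn_aux haj hr).const_mul _)
      (fun x hx => (hcong x hx).symm) measurableSet_Ioi
  · rw [setIntegral_congr_fun measurableSet_Ioi hcong, integral_const_mul,
      Real.integral_rpow_mul_exp_neg_mul_Ioi haj hr]
    have h1 : (1/r) ^ (a+j) = (1/r) ^ a * (1/r) ^ j :=
      Real.rpow_add (by positivity) _ _
    have h2 : r ^ a * (1/r) ^ a = 1 := by
      rw [← Real.mul_rpow hr.le (by positivity), mul_one_div_cancel hr.ne',
        Real.one_rpow]
    calc r ^ a / Real.Gamma a * ((1/r) ^ (a+j) * Real.Gamma (a+j))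
        = (r ^ a * (1/r) ^ a) * (Real.Gamma (a+j) / Real.Gamma a * (1/r) ^ j) := by
          rw [h1]; ring
      _ = Real.Gamma (a+j) / Real.Gamma a * (1/r) ^ j := by rw [h2, one_mul]

lemma gamma_mom0 {a r : ℝ} (ha : 0 < a) (hr : 0 < r) :
    IntegrableOn (gammaPDFReal a r) (Ioi 0) ∧
    ∫ x in Ioi 0, gammaPDFReal a r x = 1 := by
  obtain ⟨hi, hv⟩ := gamma_mom ha hr (le_refl (0:ℝ))
  have he : ∀ x ∈ Ioi (0:ℝ), x ^ (0:ℝ) * gammaPDFReal a r x = gammaPDFReal a r x := by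
    intro x hx; rw [Real.rpow_zero, one_mul]
  constructor
  · exact MeasureTheory.IntegrableOn.congr_fun hi he measurableSet_Ioi
  · rw [← setIntegral_congr_fun measurableSet_Ioi he, hv]
    rw [add_zero, Real.rpow_zero, mul_one,
      div_self (Real.Gamma_pos_of_pos ha).ne']

lemma gamma_mom1 {a r : ℝ} (ha : 0 < a) (hr : 0 < r) :
    IntegrableOn (fun x => x * gammaPDFReal a r x) (Ioi 0) ∧
    ∫ x in Ioi 0, x * gammaPDFReal a r x = a / r := by
  obtain ⟨hi, hv⟩ := gamma_mom ha hr (zero_le_one (α := ℝ))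
  have he : ∀ x ∈ Ioi (0:ℝ), x ^ (1:ℝ) * gammaPDFReal a r x = x * gammaPDFReal a r x := by
    intro x hx; rw [Real.rpow_one]
  constructor
  · exact MeasureTheory.IntegrableOn.congr_fun hi he measurableSet_Ioi
  · rw [← setIntegral_congr_fun measurableSet_Ioi he, hv,
      Real.Gamma_add_one ha.ne', Real.rpow_one]
    field_simp [(Real.Gamma_pos_of_pos ha).ne']

lemma gamma_mom2 {a r : ℝ} (ha : 0 < a) (hr : 0 < r) :
    IntegrableOn (fun x => x * x * gammaPDFReal a r x) (Ioi 0) ∧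
    ∫ x in Ioi 0, x * x * gammaPDFReal a r x = a * (a+1) / (r*r) := by
  obtain ⟨hi, hv⟩ := gamma_mom ha hr (by norm_num : (0:ℝ) ≤ 2)
  have he : ∀ x ∈ Ioi (0:ℝ), x ^ (2:ℝ) * gammaPDFReal a r x
      = x * x * gammaPDFReal a r x := by
    intro x hx
    rw [show (2:ℝ) = ((2:ℕ):ℝ) by norm_num, Real.rpow_natCast, sq]
  constructor
  · exact MeasureTheory.IntegrableOn.congr_fun hi he measurableSet_Ioi
  · rw [← setIntegral_congr_fun measurableSet_Ioi he, hv,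
      show a + 2 = (a+1) + 1 by ring, Real.Gamma_add_one (by linarith),
      Real.Gamma_add_one ha.ne',
      show (2:ℝ) = ((2:ℕ):ℝ) by norm_num, Real.rpow_natCast]
    field_simp [(Real.Gamma_pos_of_pos ha).ne']

lemma gamma_Iio_zero {a r : ℝ} : gammaMeasure a r (Iio 0) = 0 := by
  rw [gammaMeasure, withDensity_apply _ measurableSet_Iio]
  exact lintegral_gammaPDF_of_nonpos le_rfl

lemma gamma_lint_eq {a r : ℝ} (ha : 0 < a) (hr : 0 < r) {f : ℝ → ℝ}
    (hfm : Measurable f)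
    (hfi : IntegrableOn (fun x => f x * gammaPDFReal a r x) (Ioi 0))
    (hf0 : ∀ x ∈ Ioi (0:ℝ), 0 ≤ f x) :
    ∫⁻ x, ENNReal.ofReal (f x) ∂(gammaMeasure a r)
      = ENNReal.ofReal (∫ x in Ioi 0, f x * gammaPDFReal a r x) := by
  have hpdfm : Measurable (gammaPDF a r) := (measurable_gammaPDFReal a r).ennreal_ofReal
  rw [gammaMeasure, lintegral_withDensity_eq_lintegral_mul _ hpdfm hfm.ennreal_ofReal]
  have hsplit : ∫⁻ x, (gammaPDF a r * fun x => ENNReal.ofReal (f x)) x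
      = (∫⁻ x in Iio 0, (gammaPDF a r * fun x => ENNReal.ofReal (f x)) x)
        + ∫⁻ x in Ici 0, (gammaPDF a r * fun x => ENNReal.ofReal (f x)) x := by
    rw [← lintegral_add_compl _ measurableSet_Ici, compl_Ici, add_comm]
  rw [hsplit]
  have h1 : ∫⁻ x in Iio 0, (gammaPDF a r * fun x => ENNReal.ofReal (f x)) x = 0 := by
    rw [setLIntegral_congr_fun_ae (g := fun _ => 0) measurableSet_Iio
      (ae_of_all _ (fun x (hx : x < 0) => by
        simp [Pi.mul_apply, gammaPDF_of_neg hx]))]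
    simp
  rw [h1, zero_add]
  have h2 : ∫⁻ x in Ici (0:ℝ), (gammaPDF a r * fun x => ENNReal.ofReal (f x)) x
      = ∫⁻ x in Ioi 0, (gammaPDF a r * fun x => ENNReal.ofReal (f x)) x := by
    exact setLIntegral_congr Ioi_ae_eq_Ici.symm
  rw [h2]
  have h3 : ∫⁻ x in Ioi 0, (gammaPDF a r * fun x => ENNReal.ofReal (f x)) x
      = ∫⁻ x in Ioi 0, ENNReal.ofReal (f x * gammaPDFReal a r x) := by
    refine setLIntegral_congr_fun_ae measurableSet_Ioi (ae_of_all _ fun x hx => ?_)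
    have hx0 : (0:ℝ) < x := hx
    rw [Pi.mul_apply, gammaPDF,
      ← ENNReal.ofReal_mul (gammaPDFReal_nonneg ha hr x), mul_comm]
  rw [h3, ← MeasureTheory.ofReal_integral_eq_lintegral_ofReal hfi ?_]
  refine (ae_restrict_iff' measurableSet_Ioi).mpr (ae_of_all _ fun x hx => ?_)
  exact mul_nonneg (hf0 x hx) (gammaPDFReal_nonneg ha hr x)

lemma gamma_gap_bound {a r c : ℝ} (ha : 0 < a) (hr : 0 < r) (hc : 0 < c) :
    Real.log (1 + c * (a/r)) - ∫ x, Real.log (1 + c * x) ∂(gammaMeasure a r)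
      ≤ Real.log 2 + (4/a) * Real.log (1 + c * (a/r)) := by
  set μ := gammaMeasure a r with hμ
  haveI : IsProbabilityMeasure μ := isProbabilityMeasure_gammaMeasure ha hr
  set M : ℝ := a / r with hMdef
  have hM : 0 < M := div_pos ha hr
  -- variance lintegral
  have hvar : ∫⁻ x, ENNReal.ofReal ((x - M)^2) ∂μ = ENNReal.ofReal (a/(r*r)) := by
    have hfe : (fun x : ℝ => (x - M)^2 * gammaPDFReal a r x)
        = fun x => (x * x * gammaPDFReal a r x - 2*M*(x * gammaPDFReal a r x))
            + M^2 * gammaPDFReal a r x := by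
      funext x; ring
    have hB : IntegrableOn (fun x => 2*M*(x * gammaPDFReal a r x)) (Ioi 0) :=
      (gamma_mom1 ha hr).1.const_mul (2*M)
    have hC : IntegrableOn (fun x => M^2 * gammaPDFReal a r x) (Ioi 0) :=
      (gamma_mom0 ha hr).1.const_mul (M^2)
    have hAB : IntegrableOn (fun x => x * x * gammaPDFReal a r x
        - 2*M*(x * gammaPDFReal a r x)) (Ioi 0) := (gamma_mom2 ha hr).1.sub hB
    have hint : IntegrableOn (fun x => (x - M)^2 * gammaPDFReal a r x) (Ioi 0) := by
      rw [hfe]; exact hAB.add hC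
    rw [gamma_lint_eq ha hr (by fun_prop) hint (fun x _ => sq_nonneg _)]
    congr 1
    rw [hfe, integral_add hAB hC,
      integral_sub (gamma_mom2 ha hr).1 hB,
      integral_const_mul, integral_const_mul, (gamma_mom2 ha hr).2,
      (gamma_mom1 ha hr).2, (gamma_mom0 ha hr).2, hMdef]
    field_simp
    ring
  -- Chebyshev
  have hS : Iio (M/2) ⊆ {x | ENNReal.ofReal ((M/2)^2) ≤ ENNReal.ofReal ((x-M)^2)} := by
    intro x hx
    have hx' : x < M/2 := hx
    exact ENNReal.ofReal_le_ofReal (by nlinarith)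
  have hcheb1 : ENNReal.ofReal ((M/2)^2) * μ (Iio (M/2)) ≤ ENNReal.ofReal (a/(r*r)) := by
    refine (mul_le_mul_right (measure_mono hS) _).trans ?_
    rw [← hvar]
    exact mul_meas_ge_le_lintegral₀ (by fun_prop) _

  have hcheb2 : μ (Iio (M/2)) ≤ ENNReal.ofReal (4/a) := by
    have h0 : ENNReal.ofReal ((M/2)^2) ≠ 0 := by
      simp only [ne_eq, ENNReal.ofReal_eq_zero, not_le]; positivity
    have hmul : μ (Iio (M/2)) * ENNReal.ofReal ((M/2)^2) ≤ ENNReal.ofReal (a/(r*r)) := by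
      rw [mul_comm]; exact hcheb1
    have := (ENNReal.le_div_iff_mul_le (a := μ (Iio (M/2)))
      (b := ENNReal.ofReal ((M/2)^2)) (c := ENNReal.ofReal (a/(r*r)))
      (Or.inl h0) (Or.inl ENNReal.ofReal_ne_top)).2 hmul
    refine this.trans (le_of_eq ?_)
    rw [← ENNReal.ofReal_div_of_pos (by positivity)]
    congr 1
    rw [hMdef]
    field_simp
    ring
  have hcheb : (μ (Iio (M/2))).toReal ≤ 4/a :=
    ENNReal.toReal_le_of_le_ofReal (by positivity) hcheb2
  -- measure of Ici
  have hIci : 1 - 4/a ≤ (μ (Ici (M/2))).toReal := by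
    have hc1 : μ (Ici (M/2)) = 1 - μ (Iio (M/2)) := by
      rw [← compl_Iio, prob_compl_eq_one_sub measurableSet_Iio]
    rw [hc1, ENNReal.toReal_sub_of_le prob_le_one ENNReal.one_ne_top, ENNReal.toReal_one]
    linarith
  have hIciR : (μ (Ici (M/2))).toReal ≤ 1 := by
    have := prob_le_one (μ := μ) (s := Ici (M/2))
    simpa using ENNReal.toReal_le_of_le_ofReal one_pos.le (by simpa using this)
  -- the log integrand
  set g : ℝ → ℝ := fun x => Real.log (1 + c * x) with hg
  have hgm : Measurable g :=
    Real.measurable_log.comp (measurable_const.add (measurable_id'.const_mul c))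
  have hae0 : ∀ᵐ x ∂μ, 0 ≤ x := by
    rw [ae_iff]
    have : {x : ℝ | ¬ 0 ≤ x} = Iio 0 := by ext x; simp
    rw [this, hμ]
    exact gamma_Iio_zero
  have hg0 : 0 ≤ᵐ[μ] g := by
    filter_upwards [hae0] with x hx
    exact Real.log_nonneg (by nlinarith)
  have hrepr : ∫ x, g x ∂μ = (∫⁻ x, ENNReal.ofReal (g x) ∂μ).toReal :=
    integral_eq_lintegral_of_nonneg_ae hg0 hgm.aestronglyMeasurable
  -- upper bound: finiteness
  have hmean : ∫⁻ x, ENNReal.ofReal (c * x) ∂μ = ENNReal.ofReal (c * M) := by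
    have hint : IntegrableOn (fun x => (c * x) * gammaPDFReal a r x) (Ioi 0) := by
      exact MeasureTheory.IntegrableOn.congr_fun ((gamma_mom1 ha hr).1.const_mul c)
        (fun x _ => by ring) measurableSet_Ioi
    rw [gamma_lint_eq ha hr (by fun_prop) hint
      (fun x hx => mul_nonneg hc.le (le_of_lt hx))]
    congr 1
    rw [show (fun x => (c * x) * gammaPDFReal a r x)
        = fun x => c * (x * gammaPDFReal a r x) by funext x; ring,
      integral_const_mul, (gamma_mom1 ha hr).2, hMdef]
  have hub : ∫⁻ x, ENNReal.ofReal (g x) ∂μ ≤ ENNReal.ofReal (c * M) := by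
    rw [← hmean]
    refine lintegral_mono_ae ?_
    filter_upwards [hae0] with x hx
    refine ENNReal.ofReal_le_ofReal ?_
    have : (0:ℝ) < 1 + c * x := by nlinarith
    have := Real.log_le_sub_one_of_pos this
    linarith
  have hfin : ∫⁻ x, ENNReal.ofReal (g x) ∂μ ≠ ⊤ :=
    (hub.trans_lt ENNReal.ofReal_lt_top).ne
  -- lower bound on integral
  set K : ℝ := Real.log (1 + c * (M/2)) with hK
  have hK0 : 0 ≤ K := Real.log_nonneg (by nlinarith)
  have hlb : ENNReal.ofReal K * μ (Ici (M/2)) ≤ ∫⁻ x, ENNReal.ofReal (g x) ∂μ := by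
    calc ENNReal.ofReal K * μ (Ici (M/2))
        = ∫⁻ _ in Ici (M/2), ENNReal.ofReal K ∂μ := (setLIntegral_const _ _).symm
      _ ≤ ∫⁻ x in Ici (M/2), ENNReal.ofReal (g x) ∂μ := by
          refine setLIntegral_mono hgm.ennreal_ofReal (fun x hx => ?_)
          refine ENNReal.ofReal_le_ofReal (Real.log_le_log (by nlinarith) ?_)
          have hx' : M/2 ≤ x := hx
          nlinarith
      _ ≤ ∫⁻ x, ENNReal.ofReal (g x) ∂μ := setLIntegral_le_lintegral _ _
  have hint_lb : K * (μ (Ici (M/2))).toReal ≤ ∫ x, g x ∂μ := by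
    rw [hrepr]
    have := ENNReal.toReal_mono hfin hlb
    rwa [ENNReal.toReal_mul, ENNReal.toReal_ofReal hK0] at this
  -- final arithmetic
  set G : ℝ := Real.log (1 + c * M) with hG
  have hKG : K ≤ G := Real.log_le_log (by nlinarith) (by nlinarith)
  have hGK : G - K ≤ Real.log 2 := by
    have h2 : (1:ℝ) + c * M ≤ 2 * (1 + c * (M/2)) := by nlinarith
    have := Real.log_le_log (by nlinarith) h2
    rw [Real.log_mul two_ne_zero (by nlinarith)] at this
    linarith
  set t : ℝ := (μ (Ici (M/2))).toReal
  have ht0 : 0 ≤ t := ENNReal.toReal_nonneg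
  have h4a : (0:ℝ) ≤ 4/a := by positivity
  have h1t : 1 - t ≤ 4/a := by linarith
  nlinarith [mul_le_mul_of_nonneg_left h1t hK0, mul_le_mul_of_nonneg_right hKG h4a]


theorem rate_gap_eventually_small (m θ P N₀ : ℝ)
    (hm : 0 < m) (hθ : 0 < θ) (hP : 0 < P) (hN : 0 < N₀) :
    ∀ ε > (0 : ℝ), ∃ L₀ : ℕ, ∀ L : ℕ, L > L₀ →
      Real.log (1 + (P / N₀) * (θ * m * L)) -
          ∫ x, Real.log (1 + (P / N₀) * x) ∂(gammaMeasure (m * L) θ⁻¹) <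
        ε * Real.log (1 + (P / N₀) * (θ * m * L)) := by
  intro ε hε
  set c : ℝ := P / N₀ with hc
  have hc0 : 0 < c := div_pos hP hN
  refine ⟨⌈max (8/(ε*m)) (Real.exp (2*Real.log 2/ε)/(c*θ*m))⌉₊, fun L hL => ?_⟩
  have hLR : (L:ℝ) > max (8/(ε*m)) (Real.exp (2*Real.log 2/ε)/(c*θ*m)) := by
    have h1 : (⌈max (8/(ε*m)) (Real.exp (2*Real.log 2/ε)/(c*θ*m))⌉₊ : ℝ) <  (L:ℝ) := by
      exact_mod_cast Nat.cast_lt.mpr hL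
    exact lt_of_le_of_lt (Nat.le_ceil _) h1
  have haL : (0:ℝ) < m * L := by
    have h0 : 0 < L := Nat.zero_lt_of_lt hL
    have : (0:ℝ) < (L:ℝ) := by exact_mod_cast h0
    positivity
  have hr0 : (0:ℝ) < θ⁻¹ := inv_pos.mpr hθ
  have key := gamma_gap_bound haL hr0 hc0
  have hMr : (m*(L:ℝ))/θ⁻¹ = θ*m*L := by
    field_simp
  rw [hMr] at key
  set G : ℝ := Real.log (1 + c * (θ*m*L)) with hGdef
  have hcm : 0 < c*θ*m := by positivity
  have hexp : Real.exp (2*Real.log 2/ε) < c * (θ*m*(L:ℝ)) := by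
    have h2 := lt_of_le_of_lt (le_max_right (8/(ε*m)) _) hLR
    rw [div_lt_iff₀ hcm] at h2
    nlinarith
  have hG : 2*Real.log 2/ε < G := by
    rw [hGdef, ← Real.exp_lt_exp, Real.exp_log (by nlinarith [Real.exp_pos (2*Real.log 2/ε)])]
    nlinarith
  have hlog2pos : 0 < Real.log 2 := Real.log_pos one_lt_two
  have hG0 : 0 < G := lt_trans (by positivity) hG
  have hlog2 : Real.log 2 < ε/2 * G := by
    rw [div_lt_iff₀ hε] at hG
    nlinarith
  have h8 : 8 < ε * (m * L) := by
    have h2 := lt_of_lt_of_le' hLR (le_max_left (8/(ε*m)) _)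
    rw [div_lt_iff₀ (by positivity)] at h2
    nlinarith
  have h4a : 4/(m*L) ≤ ε/2 := by
    rw [div_le_div_iff₀ haL (by norm_num)]
    nlinarith
  have hmul : (4/(m*L)) * G ≤ (ε/2) * G :=
    mul_le_mul_of_nonneg_right h4a hG0.le
  linarith
end

section
/- Suppose γ_L is gamma-distributed with shape mL and scale θ_L, possibly depending on L, such that (P/N₀)·θ_L·mL → ∞ as L → ∞ for fixed P, N₀ > 0. Then E[log(1 + (P/N₀)γ_L)] / log(1 + (P/N₀)θ_L mL) → 1 as L → ∞. -/
open MeasureTheory ProbabilityTheory Filter Set Real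
open scoped ENNReal NNReal
lemma gamma_integral_eq {a r : ℝ} (ha : 0 < a) (hr : 0 < r) (g : ℝ → ℝ) :
    ∫ x, g x ∂(gammaMeasure a r) = ∫ x, gammaPDFReal a r x * g x := by
  have hpdf : gammaPDF a r = fun x => ((gammaPDFReal a r x).toNNReal : ℝ≥0∞) := rfl
  rw [gammaMeasure, hpdf,
    integral_withDensity_eq_integral_smul (measurable_gammaPDFReal a r).real_toNNReal g]
  congr 1; funext x
  rw [NNReal.smul_def, smul_eq_mul, Real.coe_toNNReal _ (gammaPDFReal_nonneg ha hr x)]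

lemma gamma_integrable_iff {a r : ℝ} (ha : 0 < a) (hr : 0 < r) (g : ℝ → ℝ) :
    Integrable g (gammaMeasure a r) ↔
      Integrable (fun x => gammaPDFReal a r x * g x) volume := by
  have hpdf : gammaPDF a r = fun x => ((gammaPDFReal a r x).toNNReal : ℝ≥0∞) := rfl
  rw [gammaMeasure, hpdf,
    integrable_withDensity_iff_integrable_smul (measurable_gammaPDFReal a r).real_toNNReal]
  apply integrable_congr
  filter_upwards with x
  rw [NNReal.smul_def, smul_eq_mul, Real.coe_toNNReal _ (gammaPDFReal_nonneg ha hr x)]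

lemma gamma_Iic_zero {a r : ℝ} : (gammaMeasure a r) (Iic 0) = 0 := by
  rw [gammaMeasure, withDensity_apply _ measurableSet_Iic,
    Measure.restrict_congr_set Iio_ae_eq_Iic.symm]
  exact lintegral_gammaPDF_of_nonpos le_rfl

lemma gamma_ae_pos {a r : ℝ} : ∀ᵐ x ∂(gammaMeasure a r), 0 < x := by
  refine ae_iff.mpr ?_
  have : {x : ℝ | ¬ 0 < x} = Iic 0 := by ext x; simp
  rw [this]; exact gamma_Iic_zero

lemma ae_ne_zero : ∀ᵐ (x : ℝ), x ≠ 0 := by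
  refine ae_iff.mpr ?_
  have : {x : ℝ | ¬ x ≠ 0} = {0} := by ext x; simp
  rw [this]; exact measure_singleton 0

lemma gamma_pdf_mul_ae_eq {a r : ℝ} (g : ℝ → ℝ) :
    (fun x => gammaPDFReal a r x * g x) =ᵐ[volume]
      (Ioi 0).indicator (fun x => gammaPDFReal a r x * g x) := by
  filter_upwards [ae_ne_zero] with x hx
  rcases lt_or_gt_of_ne hx with h | h
  · rw [indicator_of_notMem (by simpa using h.le)]
    simp [gammaPDFReal, not_le.mpr h]
  · rw [indicator_of_mem (mem_Ioi.mpr h)]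

lemma gamma_real_integral_Ioi {a r : ℝ} (g : ℝ → ℝ) :
    ∫ x, gammaPDFReal a r x * g x = ∫ x in Ioi 0, gammaPDFReal a r x * g x := by
  rw [integral_congr_ae (gamma_pdf_mul_ae_eq g), integral_indicator measurableSet_Ioi]

lemma gamma_integrableOn_imp {a r : ℝ} (g : ℝ → ℝ)
    (h : IntegrableOn (fun x => gammaPDFReal a r x * g x) (Ioi 0)) :
    Integrable (fun x => gammaPDFReal a r x * g x) volume :=
  ((integrable_indicator_iff measurableSet_Ioi).2 h).congr (gamma_pdf_mul_ae_eq g).symm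

lemma integrableOn_pdf_pow {a r : ℝ} (ha : 0 < a) (hr : 0 < r) (n : ℕ) :
    IntegrableOn (fun x => gammaPDFReal a r x * x ^ n) (Ioi 0) := by
  have key : IntegrableOn (fun x : ℝ => x ^ (a + n - 1) * exp (-(r * x))) (Ioi 0) := by
    have := integrableOn_rpow_mul_exp_neg_mul_rpow (p := 1) (s := a + n - 1) (b := r)
      (by push_cast; linarith [Nat.cast_nonneg (α := ℝ) n]) zero_lt_one hr
    refine this.congr_fun (fun x _ => ?_) measurableSet_Ioi
    simp only [rpow_one, neg_mul]
  refine IntegrableOn.congr_fun (Integrable.const_mul key (r ^ a / Gamma a))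
    (fun x hx => ?_) measurableSet_Ioi
  have hx : (0:ℝ) < x := hx
  rw [gammaPDFReal, if_pos hx.le]
  rw [show x ^ (a + n - 1) = x ^ (a - 1) * x ^ n by
    rw [← rpow_natCast x n, ← rpow_add hx]; ring_nf]
  ring

lemma gamma_pow_integrable {a r : ℝ} (ha : 0 < a) (hr : 0 < r) (n : ℕ) :
    Integrable (fun x => x ^ n) (gammaMeasure a r) := by
  rw [gamma_integrable_iff ha hr]
  exact gamma_integrableOn_imp _ (integrableOn_pdf_pow ha hr n)

lemma gamma_pow_integral {a r : ℝ} (ha : 0 < a) (hr : 0 < r) (n : ℕ) :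
    ∫ x, x ^ n ∂(gammaMeasure a r) = (Gamma (a + n) / Gamma a) / r ^ n := by
  rw [gamma_integral_eq ha hr, gamma_real_integral_Ioi]
  have hcongr : ∀ x ∈ Ioi (0:ℝ), gammaPDFReal a r x * x ^ n
      = (r ^ a / Gamma a) * (x ^ (a + n - 1) * exp (-(r * x))) := by
    intro x hx
    have hx : (0:ℝ) < x := hx
    rw [gammaPDFReal, if_pos hx.le]
    rw [show x ^ (a + n - 1) = x ^ (a - 1) * x ^ (n:ℝ) by rw [← rpow_add hx]; ring_nf,
      rpow_natCast]
    ring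
  rw [setIntegral_congr_fun measurableSet_Ioi hcongr, integral_const_mul,
    integral_rpow_mul_exp_neg_mul_Ioi (by positivity) hr]
  have h1 : (1 / r) ^ (a + (n:ℝ)) = (1/r) ^ a * (1/r) ^ (n:ℝ) := rpow_add (by positivity) _ _
  have h4 : ((1:ℝ)/r) ^ a = (r ^ a)⁻¹ := by rw [one_div, ← inv_rpow hr.le]
  have h5 : ((1:ℝ)/r) ^ ((n:ℕ):ℝ) = (r ^ (n:ℕ))⁻¹ := by
    rw [rpow_natCast, div_pow, one_pow, one_div]
  have hra : (0:ℝ) < r ^ a := rpow_pos_of_pos hr a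
  rw [h1, h4, h5]
  have hΓ : Gamma a ≠ 0 := (Gamma_pos_of_pos ha).ne'
  field_simp
lemma gamma_x_integrable {a r : ℝ} (ha : 0 < a) (hr : 0 < r) :
    Integrable (fun x => x) (gammaMeasure a r) := by
  have := gamma_pow_integrable ha hr 1
  simpa using this

lemma gamma_mean {a r : ℝ} (ha : 0 < a) (hr : 0 < r) :
    ∫ x, x ∂(gammaMeasure a r) = a / r := by
  have := gamma_pow_integral ha hr 1
  simp only [pow_one, Nat.cast_one] at this
  rw [show (fun x : ℝ => x) = fun x : ℝ => x ^ 1 by funext x; rw [pow_one]]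
  simp only [pow_one] at this ⊢
  rw [this, Gamma_add_one ha.ne']
  field_simp

lemma gamma_sq_integral {a r : ℝ} (ha : 0 < a) (hr : 0 < r) :
    ∫ x, x ^ 2 ∂(gammaMeasure a r) = a * (a + 1) / r ^ 2 := by
  rw [gamma_pow_integral ha hr 2]
  have h2 : a + (2:ℕ) = (a + 1) + 1 := by push_cast; ring
  rw [h2, Gamma_add_one (by positivity), Gamma_add_one ha.ne']
  field_simp

lemma gamma_var_integrable {a r : ℝ} (ha : 0 < a) (hr : 0 < r) :
    Integrable (fun x => (x - a / r) ^ 2) (gammaMeasure a r) := by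
  have h2 := gamma_pow_integrable ha hr 2
  have h1 := (gamma_x_integrable ha hr).const_mul (2 * (a / r))
  haveI := isProbabilityMeasure_gammaMeasure ha hr
  have := (h2.sub h1).add (integrable_const ((a / r) ^ 2))
  refine this.congr (ae_of_all _ fun x => ?_)
  simp only [Pi.add_apply, Pi.sub_apply]
  ring

lemma gamma_var {a r : ℝ} (ha : 0 < a) (hr : 0 < r) :
    ∫ x, (x - a / r) ^ 2 ∂(gammaMeasure a r) = a / r ^ 2 := by
  haveI := isProbabilityMeasure_gammaMeasure ha hr
  have h2 := gamma_pow_integrable ha hr 2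
  have h1 := (gamma_x_integrable ha hr).const_mul (2 * (a / r))
  have heq : (fun x : ℝ => (x - a / r) ^ 2)
      = fun x => (x ^ 2 - 2 * (a / r) * x) + (a / r) ^ 2 := by funext x; ring
  have hsub : Integrable (fun x : ℝ => x ^ 2 - 2 * (a / r) * x) (gammaMeasure a r) := h2.sub h1
  rw [heq, integral_add hsub (integrable_const _), integral_sub h2 h1,
    integral_const_mul, gamma_sq_integral ha hr, gamma_mean ha hr, integral_const]
  simp only [Measure.real, measure_univ, ENNReal.toReal_one, smul_eq_mul, one_mul]
  field_simp
  ring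

lemma gamma_cheb {a r : ℝ} (ha : 0 < a) (hr : 0 < r) :
    ((gammaMeasure a r) (Iio (a / (2 * r)))).toReal ≤ 4 / a := by
  set ε := a / (2 * r) with hε
  have hεpos : 0 < ε := by positivity
  have markov := mul_meas_ge_le_integral_of_nonneg
    (μ := gammaMeasure a r) (f := fun x => (x - a / r) ^ 2)
    (ae_of_all _ fun x => sq_nonneg _) (gamma_var_integrable ha hr) (ε ^ 2)
  rw [gamma_var ha hr] at markov
  have hsub : Iio ε ⊆ {x : ℝ | ε ^ 2 ≤ (x - a / r) ^ 2} := by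
    intro x hx
    have hx : x < ε := hx
    have hsplit : a / (2 * r) + a / (2 * r) = a / r := by field_simp; ring
    have h1 : ε ≤ a / r - x := by
      rw [hε]; rw [hε] at hx; linarith
    calc ε ^ 2 ≤ (a / r - x) ^ 2 := by nlinarith
      _ = (x - a / r) ^ 2 := by ring
  haveI := isProbabilityMeasure_gammaMeasure ha hr
  have hmono : ((gammaMeasure a r) (Iio ε)).toReal
      ≤ ((gammaMeasure a r) {x : ℝ | ε ^ 2 ≤ (x - a / r) ^ 2}).toReal :=
    ENNReal.toReal_mono (measure_ne_top _ _) (measure_mono hsub)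
  have h4 : ((gammaMeasure a r) {x : ℝ | ε ^ 2 ≤ (x - a / r) ^ 2}).toReal
      ≤ (a / r ^ 2) / ε ^ 2 := by
    rw [le_div_iff₀ (by positivity)]
    simp only [Measure.real] at markov
    linarith [markov]
  have : (a / r ^ 2) / ε ^ 2 = 4 / a := by
    rw [hε]; field_simp; ring
  linarith

lemma gamma_log_integrable {a r c : ℝ} (ha : 0 < a) (hr : 0 < r) (hc : 0 < c) :
    Integrable (fun x => Real.log (1 + c * x)) (gammaMeasure a r) := by
  have hx1 : Integrable (fun x => c * x) (gammaMeasure a r) :=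
    (gamma_x_integrable ha hr).const_mul c
  refine hx1.mono ?_ ?_
  · exact (Real.measurable_log.comp
      (measurable_const.add (measurable_id'.const_mul c))).aestronglyMeasurable
  · filter_upwards [gamma_ae_pos] with x hx
    have hcx : 0 ≤ c * x := by positivity
    have h1 : 0 ≤ Real.log (1 + c * x) := Real.log_nonneg (by linarith)
    have h2 : Real.log (1 + c * x) ≤ c * x := by
      have := Real.log_le_sub_one_of_pos (show (0:ℝ) < 1 + c * x by linarith)
      linarith
    rw [Real.norm_eq_abs, Real.norm_eq_abs, abs_of_nonneg h1, abs_of_nonneg hcx]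
    exact h2

lemma gamma_log_upper {a r c : ℝ} (ha : 0 < a) (hr : 0 < r) (hc : 0 < c) :
    ∫ x, Real.log (1 + c * x) ∂(gammaMeasure a r) ≤ Real.log (1 + c * (a / r)) := by
  haveI := isProbabilityMeasure_gammaMeasure ha hr
  set μ0 := a / r with hμ0
  have hμ0pos : 0 < μ0 := by positivity
  set B := c / (1 + c * μ0) with hB
  set A := Real.log (1 + c * μ0) - B * μ0 with hA
  have hd : (0:ℝ) < 1 + c * μ0 := by positivity
  have hint : Integrable (fun x => A + B * x) (gammaMeasure a r) :=
    (integrable_const A).add ((gamma_x_integrable ha hr).const_mul B)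
  have hptwise : ∀ᵐ x ∂(gammaMeasure a r), Real.log (1 + c * x) ≤ A + B * x := by
    filter_upwards [gamma_ae_pos] with x hx
    have hdx : (0:ℝ) < 1 + c * x := by positivity
    have key : Real.log (1 + c * x) - Real.log (1 + c * μ0)
        ≤ (1 + c * x) / (1 + c * μ0) - 1 := by
      rw [← Real.log_div hdx.ne' hd.ne']
      exact Real.log_le_sub_one_of_pos (by positivity)
    have harith : (1 + c * x) / (1 + c * μ0) - 1 = B * (x - μ0) := by
      rw [hB]; field_simp; ring
    rw [harith] at key
    rw [hA]; linarith
  have := integral_mono_ae (gamma_log_integrable ha hr hc) hint hptwise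
  have hBx : Integrable (fun x : ℝ => B * x) (gammaMeasure a r) :=
    (gamma_x_integrable ha hr).const_mul B
  rw [integral_add (integrable_const A) hBx,
    integral_const, integral_const_mul, gamma_mean ha hr, ← hμ0] at this
  simp only [Measure.real, measure_univ, ENNReal.toReal_one, smul_eq_mul, one_mul] at this
  rw [hA] at this
  linarith

lemma gamma_log_lower {a r c : ℝ} (ha : 0 < a) (hr : 0 < r) (hc : 0 < c) :
    (1 - 4 / a) * Real.log (1 + c * (a / (2 * r)))
      ≤ ∫ x, Real.log (1 + c * x) ∂(gammaMeasure a r) := by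
  haveI := isProbabilityMeasure_gammaMeasure ha hr
  set ε := a / (2 * r) with hε
  have hεpos : 0 < ε := by positivity
  set ε₀ := Real.log (1 + c * ε) with hε₀
  have hε₀nonneg : 0 ≤ ε₀ := Real.log_nonneg (by nlinarith)
  have markov := mul_meas_ge_le_integral_of_nonneg
    (μ := gammaMeasure a r) (f := fun x => Real.log (1 + c * x))
    (by filter_upwards [gamma_ae_pos] with x hx
        exact Real.log_nonneg (by nlinarith))
    (gamma_log_integrable ha hr hc) ε₀
  have hsub : Ici ε ⊆ {x : ℝ | ε₀ ≤ Real.log (1 + c * x)} := by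
    intro x hx
    have hx : ε ≤ x := hx
    exact Real.log_le_log (by positivity) (by nlinarith)
  have hciT : ((gammaMeasure a r) (Ici ε)).toReal
      ≤ ((gammaMeasure a r) {x : ℝ | ε₀ ≤ Real.log (1 + c * x)}).toReal :=
    ENNReal.toReal_mono (measure_ne_top _ _) (measure_mono hsub)
  have hcompl : ((gammaMeasure a r) (Ici ε)).toReal
      = 1 - ((gammaMeasure a r) (Iio ε)).toReal := by
    have h1 : (gammaMeasure a r) (Ici ε) = 1 - (gammaMeasure a r) (Iio ε) := by
      rw [show Ici ε = (Iio ε)ᶜ by simp, prob_compl_eq_one_sub measurableSet_Iio]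
    rw [h1, ENNReal.toReal_sub_of_le prob_le_one ENNReal.one_ne_top, ENNReal.toReal_one]
  have htail := gamma_cheb ha hr
  have hIci : 1 - 4 / a ≤ ((gammaMeasure a r) (Ici ε)).toReal := by
    rw [hcompl]; linarith
  calc (1 - 4 / a) * ε₀ = ε₀ * (1 - 4 / a) := by ring
    _ ≤ ε₀ * ((gammaMeasure a r) {x : ℝ | ε₀ ≤ Real.log (1 + c * x)}).toReal := by
        apply mul_le_mul_of_nonneg_left _ hε₀nonneg
        linarith
    _ ≤ _ := markov
theorem ergodic_rate_ratio_varying_scale (m P N₀ : ℝ) (θ : ℕ → ℝ)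
    (hm : 0 < m) (hθ : ∀ L, 0 < θ L) (hP : 0 < P) (hN : 0 < N₀)
    (hdiv : Tendsto (fun L : ℕ => (P / N₀) * θ L * m * L) atTop atTop) :
    Tendsto (fun L : ℕ =>
        (∫ x, Real.log (1 + (P / N₀) * x) ∂(gammaMeasure (m * L) (θ L)⁻¹)) /
          Real.log (1 + (P / N₀) * (θ L * m * L))) atTop (nhds 1) := by
  have hc : 0 < P / N₀ := div_pos hP hN
  set c := P / N₀ with hcdef
  set t : ℕ → ℝ := fun L => c * θ L * m * L with ht
  have hdiv' : Tendsto t atTop atTop := hdiv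
  have hmL : Tendsto (fun L : ℕ => m * (L : ℝ)) atTop atTop :=
    Tendsto.const_mul_atTop hm tendsto_natCast_atTop_atTop
  have hD : Tendsto (fun L : ℕ => Real.log (1 + t L)) atTop atTop := by
    apply Real.tendsto_log_atTop.comp
    exact tendsto_atTop_add_const_left _ 1 hdiv'
  -- eventual two-sided bounds on the ratio
  have hbound : ∀ᶠ L : ℕ in atTop,
      (1 - 4 / (m * L)) * Real.log (1 + t L / 2) / Real.log (1 + t L)
        ≤ (∫ x, Real.log (1 + c * x) ∂(gammaMeasure (m * L) (θ L)⁻¹)) /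
            Real.log (1 + c * (θ L * m * L))
      ∧ (∫ x, Real.log (1 + c * x) ∂(gammaMeasure (m * L) (θ L)⁻¹)) /
            Real.log (1 + c * (θ L * m * L)) ≤ 1 := by
    filter_upwards [eventually_ge_atTop 1, hdiv'.eventually_ge_atTop 1] with L hL1 ht1
    have hLpos : (0:ℝ) < L := by exact_mod_cast Nat.pos_of_ne_zero (by omega)
    have haL : 0 < m * (L : ℝ) := mul_pos hm hLpos
    have hrL : 0 < (θ L)⁻¹ := inv_pos.mpr (hθ L)
    have hDe : c * (θ L * m * (L:ℝ)) = t L := by simp only [ht]; ring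
    have hDpos : 0 < Real.log (1 + t L) := Real.log_pos (by linarith)
    have hupper := gamma_log_upper haL hrL hc
    have hlower := gamma_log_lower haL hrL hc
    have e1 : c * (m * (L:ℝ) / (θ L)⁻¹) = t L := by
      rw [div_eq_mul_inv, inv_inv]; simp only [ht]; ring
    have e2 : c * (m * (L:ℝ) / (2 * (θ L)⁻¹)) = t L / 2 := by
      rw [div_eq_mul_inv, mul_inv, inv_inv]; simp only [ht]; ring
    rw [e1] at hupper
    rw [e2] at hlower
    rw [hDe]
    constructor
    · gcongr
    · rw [div_le_one hDpos]
      exact hupper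
  -- limit of the lower bound
  have hf1 : Tendsto (fun L : ℕ => 1 - 4 / (m * L)) atTop (nhds 1) := by
    have h40 : Tendsto (fun L : ℕ => 4 / (m * (L:ℝ))) atTop (nhds 0) :=
      tendsto_const_nhds.div_atTop hmL
    simpa using tendsto_const_nhds.sub h40
  have hf2 : Tendsto (fun L : ℕ => Real.log (1 + t L / 2) / Real.log (1 + t L))
      atTop (nhds 1) := by
    have hlo : ∀ᶠ L : ℕ in atTop,
        1 - Real.log 2 / Real.log (1 + t L)
          ≤ Real.log (1 + t L / 2) / Real.log (1 + t L) := by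
      filter_upwards [hdiv'.eventually_ge_atTop 1] with L ht1
      have hDpos : 0 < Real.log (1 + t L) := Real.log_pos (by linarith)
      have hnum : Real.log (1 + t L) - Real.log 2 ≤ Real.log (1 + t L / 2) := by
        have hmul : Real.log 2 + Real.log (1 + t L / 2) = Real.log (2 * (1 + t L / 2)) :=
          (Real.log_mul two_ne_zero (by linarith)).symm
        have hle : Real.log (1 + t L) ≤ Real.log (2 * (1 + t L / 2)) :=
          Real.log_le_log (by linarith) (by linarith)
        linarith
      have : 1 - Real.log 2 / Real.log (1 + t L)
          = (Real.log (1 + t L) - Real.log 2) / Real.log (1 + t L) := by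
        rw [sub_div, div_self hDpos.ne']
      rw [this]
      gcongr
    have hup : ∀ᶠ L : ℕ in atTop,
        Real.log (1 + t L / 2) / Real.log (1 + t L) ≤ 1 := by
      filter_upwards [hdiv'.eventually_ge_atTop 1] with L ht1
      have hDpos : 0 < Real.log (1 + t L) := Real.log_pos (by linarith)
      rw [div_le_one hDpos]
      exact Real.log_le_log (by linarith) (by linarith)
    have hlolim : Tendsto (fun L : ℕ => 1 - Real.log 2 / Real.log (1 + t L))
        atTop (nhds 1) := by
      simpa using tendsto_const_nhds.sub (tendsto_const_nhds.div_atTop hD)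
    exact tendsto_of_tendsto_of_tendsto_of_le_of_le' hlolim tendsto_const_nhds hlo hup
  have hlowlim : Tendsto (fun L : ℕ =>
      (1 - 4 / (m * L)) * Real.log (1 + t L / 2) / Real.log (1 + t L)) atTop (nhds 1) := by
    simp only [mul_div_assoc]
    simpa using hf1.mul hf2
  exact tendsto_of_tendsto_of_tendsto_of_le_of_le' hlowlim tendsto_const_nhds
    (hbound.mono fun L h => h.1) (hbound.mono fun L h => h.2)
end
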